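/- arXiv:2306.01127 — 4 statements merged into one kernel-verified Lean document; each statement's English description precedes it below -/
import Mathlib

section
/- For w ∈ S_n and 1 ≤ i < j ≤ n, define M_{i,j}(w) = #{k : i < k < j and w(k) < w(i)}. Then M_{i,j} satisfies the recursion: M_{i,j}(w) = 0 if j ≤ i+1, and for j > i+1, M_{i,j}(w) = M_{i,j-1}(w) + 1 if α_{j-1} < α_i − M_{i,j-1}(w), and M_{i,j}(w) = M_{i,j-1}(w) otherwise, where α is the code of w. -/
/-- The Lehmer code of a permutation: `code w i = #{k > i : w k < w i}`. -/
def permCode {n : ℕ} (w : Equiv.Perm (Fin n)) (i : Fin n) : ℕ :=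
  (Finset.univ.filter (fun k : Fin n => i < k ∧ w k < w i)).card

/-- The extended matrix `M_{i,j}(w) = #{k : i < k < j, w k < w i}` (0-based positions,
`j` exclusive). -/
def Mmat {n : ℕ} (w : Equiv.Perm (Fin n)) (i : Fin n) (j : ℕ) : ℕ :=
  (Finset.univ.filter (fun k : Fin n => (i : ℕ) < (k : ℕ) ∧ (k : ℕ) < j ∧ w k < w i)).card

/-- The recursion for `M_{i,j}`: it vanishes for `j ≤ i+1`, and for `j > i+1` it increases
from `M_{i,j-1}` by one exactly when `α_{j-1} < α_i − M_{i,j-1}`, where `α` is the code. -/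
theorem Mmat_recursion {n : ℕ} (w : Equiv.Perm (Fin n)) (i : Fin n) (j : ℕ) :
    (j ≤ (i : ℕ) + 1 → Mmat w i j = 0) ∧
    (∀ j' : Fin n, (j' : ℕ) + 1 = j → (i : ℕ) + 1 < j →
      Mmat w i j = Mmat w i (j - 1) +
        (if permCode w j' < permCode w i - Mmat w i (j - 1) then 1 else 0)) := by
  constructor
  · intro hj
    rw [Mmat, Finset.card_eq_zero, Finset.filter_eq_empty_iff]
    intro k _
    push_neg
    intro h1 h2
    omega
  · intro j' hj' hij
    subst hj'
    have hij' : (i : ℕ) < (j' : ℕ) := by omega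
    simp only [Nat.add_sub_cancel]
    set S1 : Finset (Fin n) :=
      Finset.univ.filter (fun k : Fin n => (i : ℕ) < (k : ℕ) ∧ (k : ℕ) < (j' : ℕ) ∧ w k < w i)
      with hS1
    set A : Finset (Fin n) :=
      Finset.univ.filter (fun k : Fin n => (i : ℕ) < (k : ℕ) ∧ (k : ℕ) < (j' : ℕ) + 1 ∧ w k < w i)
      with hA
    set B : Finset (Fin n) :=
      Finset.univ.filter (fun k : Fin n => (j' : ℕ) < (k : ℕ) ∧ w k < w i) with hB
    -- decomposition of permCode w i
    have hunion : Finset.univ.filter (fun k : Fin n => i < k ∧ w k < w i) = A ∪ B := by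
      ext k
      simp only [hA, hB, Finset.mem_filter, Finset.mem_union, Finset.mem_univ, true_and,
        Fin.lt_def]
      by_cases h : w k < w i <;> simp [h] <;> omega
    have hdisj : Disjoint A B := by
      rw [Finset.disjoint_left]
      intro k hk hk'
      simp only [hA, hB, Finset.mem_filter, Finset.mem_univ, true_and] at hk hk'
      omega
    have hcodei : permCode w i = A.card + B.card := by
      rw [permCode, hunion, Finset.card_union_of_disjoint hdisj]
    -- card of A depending on whether w j' < w i
    have hcardA : A.card = S1.card + (if w j' < w i then 1 else 0) := by
      by_cases h : w j' < w i
      · have hA' : A = insert j' S1 := by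
          ext k
          simp only [hA, hS1, Finset.mem_insert, Finset.mem_filter, Finset.mem_univ, true_and]
          constructor
          · rintro ⟨h1, h2, h3⟩
            rcases Nat.lt_or_ge (k : ℕ) (j' : ℕ) with hk | hk
            · exact Or.inr ⟨h1, hk, h3⟩
            · exact Or.inl (Fin.ext (by omega))
          · rintro (rfl | ⟨h1, h2, h3⟩)
            · exact ⟨hij', by omega, h⟩
            · exact ⟨h1, by omega, h3⟩
        rw [if_pos h, hA', Finset.card_insert_of_notMem (by simp [hS1])]
      · have hA' : A = S1 := by
          ext k
          simp only [hA, hS1, Finset.mem_filter, Finset.mem_univ, true_and]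
          constructor
          · rintro ⟨h1, h2, h3⟩
            refine ⟨h1, ?_, h3⟩
            rcases Nat.lt_or_ge (k : ℕ) (j' : ℕ) with hk | hk
            · exact hk
            · exact absurd (Fin.ext (show (k:ℕ) = (j':ℕ) by omega) ▸ h3) h
          · rintro ⟨h1, h2, h3⟩
            exact ⟨h1, by omega, h3⟩
        rw [if_neg h, hA', Nat.add_zero]
    have hM1 : Mmat w i (j' : ℕ) = S1.card := rfl
    have hM2 : Mmat w i ((j' : ℕ) + 1) = A.card := rfl
    -- comparison of permCode w j' with B.card
    have hsum : permCode w i = (S1.card + if w j' < w i then 1 else 0) + B.card := by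
      rw [hcodei, hcardA]
    have hkey : permCode w j' < permCode w i - S1.card ↔ w j' < w i := by
      by_cases h : w j' < w i
      · rw [if_pos h] at hsum
        have hle : permCode w j' ≤ B.card := by
          apply Finset.card_le_card
          intro k hk
          simp only [Finset.mem_filter, Finset.mem_univ, true_and, Fin.lt_def] at hk
          simp only [hB, Finset.mem_filter, Finset.mem_univ, true_and]
          exact ⟨hk.1, hk.2.trans h⟩
        exact iff_of_true (by omega) h
      · rw [if_neg h] at hsum
        have hle : B.card ≤ permCode w j' := by
          apply Finset.card_le_card
          intro k hk
          simp only [hB, Finset.mem_filter, Finset.mem_univ, true_and] at hk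
          simp only [permCode, Finset.mem_filter, Finset.mem_univ, true_and, Fin.lt_def]
          refine ⟨hk.1, ?_⟩
          have hne : w i ≠ w j' := by
            intro he
            exact absurd (w.injective he) (by intro he'; subst he'; omega)
          exact hk.2.trans (lt_of_le_of_ne (not_lt.mp h) hne)
        exact iff_of_false (by omega) h
    rw [hM2, hM1, hcardA]
    by_cases h : w j' < w i
    · rw [if_pos h, if_pos (hkey.mpr h)]
    · rw [if_neg h, if_neg (fun hc => h (hkey.mp hc))]
end

section
/- Let w, w' ∈ S_n with codes α, α'. Then w covers w' in the Bruhat order with w' = w · (i,j) (for some i < j) if and only if: (a1) α'_i ≤ α_i − 1; (a2) α'_j = α_j + α_i − α'_i − 1; (a3) α'_k = α_k for all k ≠ i, j; and (a4) M_{i,j}(w) = M_{i,j}(w') = α'_i − α_j. -/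
/-- The length of a permutation is its number of inversions. -/
def permLen {n : ℕ} (w : Equiv.Perm (Fin n)) : ℕ :=
  (Finset.univ.filter (fun p : Fin n × Fin n => p.1 < p.2 ∧ w p.2 < w p.1)).card

/-- One step in the Bruhat order: multiply on the right by a transposition and increase
the length. -/
def bruhatStep {n : ℕ} (u v : Equiv.Perm (Fin n)) : Prop :=
  (∃ a b : Fin n, a ≠ b ∧ v = u * Equiv.swap a b) ∧ permLen u < permLen v

/-- The strict strong Bruhat order on `S_n`. -/
def bruhatLT {n : ℕ} (u v : Equiv.Perm (Fin n)) : Prop :=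
  Relation.TransGen bruhatStep u v

/-- `w` covers `w'` in the strong Bruhat order: `w' < w` and there is no intermediate
element. -/
def bruhatCovers {n : ℕ} (w w' : Equiv.Perm (Fin n)) : Prop :=
  bruhatLT w' w ∧ ∀ z : Equiv.Perm (Fin n), bruhatLT w' z → ¬ bruhatLT z w

set_option linter.unusedSectionVars false

namespace BruhatAux

open Finset Equiv

variable {n : ℕ}

lemma permCode_eq_sum (u : Equiv.Perm (Fin n)) (i : Fin n) :
    permCode u i = ∑ k, if i < k ∧ u k < u i then 1 else 0 :=
  Finset.card_filter _ _

lemma Mmat_eq_sum (u : Equiv.Perm (Fin n)) (a b : Fin n) :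
    Mmat u a (b : ℕ) = ∑ k, if a < k ∧ k < b ∧ u k < u a then 1 else 0 := by
  rw [Mmat, Finset.card_filter]
  refine Finset.sum_congr rfl fun k _ => ?_
  congr 1

lemma permLen_eq_sum (u : Equiv.Perm (Fin n)) :
    permLen u = ∑ k, permCode u k := by
  rw [permLen, Finset.card_eq_sum_card_fiberwise
    (f := Prod.fst) (t := Finset.univ) (fun x _ => Finset.mem_univ _)]
  refine Finset.sum_congr rfl fun k _ => ?_
  rw [permCode]
  apply Finset.card_bij (fun p _ => p.2)
  · intro p hp
    simp only [Finset.mem_filter, Finset.mem_univ, true_and] at hp ⊢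
    obtain ⟨⟨h1, h2⟩, h3⟩ := hp
    exact ⟨h3 ▸ h1, h3 ▸ h2⟩
  · intro p hp q hq hpq
    simp only [Finset.mem_filter] at hp hq
    exact Prod.ext (hp.2.trans hq.2.symm) hpq
  · intro l hl
    simp only [Finset.mem_filter, Finset.mem_univ, true_and] at hl
    exact ⟨(k, l), by simp [hl.1, hl.2], rfl⟩

lemma sum_split_two (f : Fin n → ℕ) {a b : Fin n} (h : a ≠ b) :
    ∑ k, f k = f a + (f b + ∑ k ∈ (Finset.univ.erase a).erase b, f k) := by
  rw [Finset.add_sum_erase _ f (Finset.mem_erase.2 ⟨h.symm, Finset.mem_univ b⟩),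
      Finset.add_sum_erase _ f (Finset.mem_univ a)]

section main

variable {u : Equiv.Perm (Fin n)} {a b : Fin n}

lemma v_apply_a : (u * Equiv.swap a b) a = u b := by
  rw [Equiv.Perm.mul_apply, Equiv.swap_apply_left]

lemma v_apply_b : (u * Equiv.swap a b) b = u a := by
  rw [Equiv.Perm.mul_apply, Equiv.swap_apply_right]

lemma v_apply_ne {k : Fin n} (h1 : k ≠ a) (h2 : k ≠ b) : (u * Equiv.swap a b) k = u k := by
  rw [Equiv.Perm.mul_apply, Equiv.swap_apply_of_ne_of_ne h1 h2]

variable (hab : a < b) (huv : u a < u b)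
include hab huv

lemma code_b_v : permCode (u * Equiv.swap a b) b = ∑ k, if b < k ∧ u k < u a then 1 else 0 := by
  rw [permCode_eq_sum]
  refine Finset.sum_congr rfl fun k _ => ?_
  by_cases hk : b < k
  · rw [v_apply_b, v_apply_ne (hab.trans hk).ne' hk.ne']
  · simp [hk]

lemma code_a_u : permCode u a = Mmat u a (b : ℕ) + ∑ k, if b < k ∧ u k < u a then 1 else 0 := by
  rw [permCode_eq_sum, Mmat_eq_sum, ← Finset.sum_add_distrib]
  refine Finset.sum_congr rfl fun k _ => ?_
  rcases lt_trichotomy k b with h|rfl|h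
  · simp [h, h.asymm]
  · simp [lt_irrefl, huv.asymm]
  · simp [h, h.asymm, hab.trans h]

lemma code_a_v : permCode (u * Equiv.swap a b) a
    = 1 + (∑ k, if a < k ∧ k < b ∧ u k < u b then 1 else 0)
      + ∑ k, if b < k ∧ u k < u b then 1 else 0 := by
  rw [permCode_eq_sum]
  have key : ∀ k : Fin n,
      (if a < k ∧ (u * Equiv.swap a b) k < (u * Equiv.swap a b) a then 1 else 0)
      = (if k = b then 1 else 0) + ((if a < k ∧ k < b ∧ u k < u b then 1 else 0)
          + (if b < k ∧ u k < u b then 1 else 0)) := by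
    intro k
    rw [v_apply_a]
    rcases eq_or_ne k b with rfl|hkb
    · rw [v_apply_b]
      simp [hab, huv, lt_irrefl]
    · rcases eq_or_ne k a with rfl|hka
      · simp [lt_irrefl, hkb, hab.asymm]
      · rw [v_apply_ne hka hkb]
        rcases lt_trichotomy k b with h|h|h
        · simp [hkb, h, h.asymm]
        · exact absurd h hkb
        · simp [hkb, h.ne', h, h.asymm, hab.trans h]
  rw [Finset.sum_congr rfl fun k _ => key k, Finset.sum_add_distrib, Finset.sum_add_distrib,
    Fintype.sum_ite_eq' b (fun _ => 1)]
  omega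

lemma code_small {k : Fin n} (hk : k < a) :
    permCode (u * Equiv.swap a b) k = permCode u k := by
  have hvk : (u * Equiv.swap a b) k = u k := v_apply_ne hk.ne (hk.trans hab).ne
  rw [permCode_eq_sum, permCode_eq_sum, sum_split_two _ hab.ne, sum_split_two _ hab.ne]
  have hrest : ∑ l ∈ (Finset.univ.erase a).erase b,
      (if k < l ∧ (u * Equiv.swap a b) l < (u * Equiv.swap a b) k then 1 else 0)
      = ∑ l ∈ (Finset.univ.erase a).erase b, (if k < l ∧ u l < u k then 1 else 0) := by
    refine Finset.sum_congr rfl fun l hl => ?_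
    simp only [Finset.mem_erase] at hl
    rw [hvk, v_apply_ne hl.2.1 hl.1]
  rw [hrest, hvk, v_apply_a, v_apply_b]
  have h2 : k < b := hk.trans hab
  simp only [hk, h2, true_and]
  omega

lemma code_big {k : Fin n} (hk : b < k) :
    permCode (u * Equiv.swap a b) k = permCode u k := by
  have hvk : (u * Equiv.swap a b) k = u k := v_apply_ne (hab.trans hk).ne' hk.ne'
  rw [permCode_eq_sum, permCode_eq_sum]
  refine Finset.sum_congr rfl fun l _ => ?_
  by_cases h : k < l
  · rw [hvk, v_apply_ne (hab.trans (hk.trans h)).ne' (hk.trans h).ne']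
  · simp [h]

lemma code_mid {k : Fin n} (h1 : a < k) (h2 : k < b) :
    permCode (u * Equiv.swap a b) k + (if u b < u k then 1 else 0)
      = permCode u k + (if u a < u k then 1 else 0) := by
  have hvk : (u * Equiv.swap a b) k = u k := v_apply_ne h1.ne' h2.ne
  rw [permCode_eq_sum, permCode_eq_sum, sum_split_two _ hab.ne, sum_split_two _ hab.ne]
  have hrest : ∑ l ∈ (Finset.univ.erase a).erase b,
      (if k < l ∧ (u * Equiv.swap a b) l < (u * Equiv.swap a b) k then 1 else 0)
      = ∑ l ∈ (Finset.univ.erase a).erase b, (if k < l ∧ u l < u k then 1 else 0) := by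
    refine Finset.sum_congr rfl fun l hl => ?_
    simp only [Finset.mem_erase] at hl
    rw [hvk, v_apply_ne hl.2.1 hl.1]
  rw [hrest, hvk, v_apply_a, v_apply_b]
  simp only [h1.asymm, h2, false_and, if_false, true_and]
  omega

lemma cA'_le_cA : Mmat u a (b : ℕ) ≤ ∑ k, if a < k ∧ k < b ∧ u k < u b then 1 else 0 := by
  rw [Mmat_eq_sum]
  refine Finset.sum_le_sum fun k _ => ?_
  split_ifs with h1 h2
  · exact le_refl _
  · exact absurd ⟨h1.1, h1.2.1, h1.2.2.trans huv⟩ h2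
  · omega
  · exact le_refl _

lemma cC_le : (∑ k, if b < k ∧ u k < u a then 1 else 0) ≤ permCode u b := by
  rw [permCode_eq_sum]
  refine Finset.sum_le_sum fun k _ => ?_
  split_ifs with h1 h2
  · exact le_refl _
  · exact absurd ⟨h1.1, h1.2.trans huv⟩ h2
  · omega
  · exact le_refl _

lemma partA : (∑ k, if a < k ∧ k < b ∧ u k < u b then 1 else 0)
    + (∑ k, if a < k ∧ k < b ∧ u b < u k then 1 else 0)
    = ∑ k : Fin n, if a < k ∧ k < b then 1 else 0 := by
  rw [← Finset.sum_add_distrib]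
  refine Finset.sum_congr rfl fun k _ => ?_
  by_cases hk : a < k ∧ k < b
  · have hne : u k ≠ u b := fun h => hk.2.ne (u.injective h)
    rcases hne.lt_or_gt with h|h
    · simp [hk.1, hk.2, h, h.asymm]
    · simp [hk.1, hk.2, h, h.asymm]
  · rw [not_and_or] at hk
    rcases hk with h|h <;> simp [h]

lemma partA' : Mmat u a (b : ℕ)
    + (∑ k, if a < k ∧ k < b ∧ u a < u k then 1 else 0)
    = ∑ k : Fin n, if a < k ∧ k < b then 1 else 0 := by
  rw [Mmat_eq_sum, ← Finset.sum_add_distrib]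
  refine Finset.sum_congr rfl fun k _ => ?_
  by_cases hk : a < k ∧ k < b
  · have hne : u k ≠ u a := fun h => hk.1.ne' (u.injective h)
    rcases hne.lt_or_gt with h|h
    · simp [hk.1, hk.2, h, h.asymm]
    · simp [hk.1, hk.2, h, h.asymm]
  · rw [not_and_or] at hk
    rcases hk with h|h <;> simp [h]

lemma A_eq_iff : (∑ k, if a < k ∧ k < b ∧ u k < u b then 1 else 0) = Mmat u a (b : ℕ)
    ↔ ∀ k, a < k → k < b → ¬(u a < u k ∧ u k < u b) := by
  rw [Mmat_eq_sum, ← Finset.card_filter, ← Finset.card_filter]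
  have hsub : Finset.univ.filter (fun k : Fin n => a < k ∧ k < b ∧ u k < u a)
      ⊆ Finset.univ.filter (fun k : Fin n => a < k ∧ k < b ∧ u k < u b) := by
    intro x hx
    simp only [Finset.mem_filter, Finset.mem_univ, true_and] at hx ⊢
    exact ⟨hx.1, hx.2.1, hx.2.2.trans huv⟩
  constructor
  · intro h k hk1 hk2 hv
    have heq := Finset.eq_of_subset_of_card_le hsub (le_of_eq h)
    have hk : k ∈ Finset.univ.filter (fun k : Fin n => a < k ∧ k < b ∧ u k < u b) := by
      simp only [Finset.mem_filter, Finset.mem_univ, true_and]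
      exact ⟨hk1, hk2, hv.2⟩
    rw [← heq] at hk
    simp only [Finset.mem_filter, Finset.mem_univ, true_and] at hk
    exact absurd hv.1 hk.2.2.asymm
  · intro h
    congr 1
    refine (Finset.Subset.antisymm ?_ hsub)
    intro x hx
    simp only [Finset.mem_filter, Finset.mem_univ, true_and] at hx ⊢
    refine ⟨hx.1, hx.2.1, ?_⟩
    have h3 := h x hx.1 hx.2.1
    have : ¬ u a < u x := fun hc => h3 ⟨hc, hx.2.2⟩
    rcases lt_or_eq_of_le (le_of_not_gt this) with h4|h4
    · exact h4
    · exact absurd (u.injective h4.symm).symm hx.1.ne'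

lemma len_eq : permLen (u * Equiv.swap a b) + 2 * Mmat u a (b : ℕ)
    = permLen u + 1 + 2 * (∑ k, if a < k ∧ k < b ∧ u k < u b then 1 else 0) := by
  rw [permLen_eq_sum, permLen_eq_sum, sum_split_two (permCode (u * Equiv.swap a b)) hab.ne,
    sum_split_two (permCode u) hab.ne]
  have hrest : (∑ k ∈ (Finset.univ.erase a).erase b, permCode (u * Equiv.swap a b) k)
      + (∑ k ∈ (Finset.univ.erase a).erase b, if a < k ∧ k < b ∧ u b < u k then 1 else 0)
      = (∑ k ∈ (Finset.univ.erase a).erase b, permCode u k)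
      + (∑ k ∈ (Finset.univ.erase a).erase b, if a < k ∧ k < b ∧ u a < u k then 1 else 0) := by
    rw [← Finset.sum_add_distrib, ← Finset.sum_add_distrib]
    refine Finset.sum_congr rfl fun k hk => ?_
    simp only [Finset.mem_erase] at hk
    rcases lt_trichotomy k a with h|rfl|h
    · rw [code_small hab huv h]
      simp [h.asymm]
    · exact absurd rfl hk.2.1
    · rcases lt_trichotomy k b with h2|rfl|h2
      · have hm := code_mid hab huv h h2
        simp only [h, h2, true_and]
        omega
      · exact absurd rfl hk.1
      · rw [code_big hab huv h2]
        simp [h2.asymm]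
  have hDv : (∑ k ∈ (Finset.univ.erase a).erase b, if a < k ∧ k < b ∧ u b < u k then 1 else 0)
      = ∑ k : Fin n, if a < k ∧ k < b ∧ u b < u k then 1 else 0 := by
    rw [sum_split_two (fun k => if a < k ∧ k < b ∧ u b < u k then 1 else 0) hab.ne]
    simp [lt_irrefl]
  have hDu : (∑ k ∈ (Finset.univ.erase a).erase b, if a < k ∧ k < b ∧ u a < u k then 1 else 0)
      = ∑ k : Fin n, if a < k ∧ k < b ∧ u a < u k then 1 else 0 := by
    rw [sum_split_two (fun k => if a < k ∧ k < b ∧ u a < u k then 1 else 0) hab.ne]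
    simp [lt_irrefl]
  rw [hDv, hDu] at hrest
  have e1 := code_a_v hab huv
  have e2 := code_b_v hab huv
  have e3 := code_a_u hab huv
  have e4 := partA hab huv
  have e5 := partA' hab huv
  have e6 : (∑ k, if b < k ∧ u k < u b then 1 else 0) = permCode u b :=
    (permCode_eq_sum u b).symm
  omega

end main

end BruhatAux


namespace BruhatAux2

open Finset Equiv BruhatAux

variable {n : ℕ}

lemma bruhatLT_len {x y : Equiv.Perm (Fin n)} (h : bruhatLT x y) : permLen x < permLen y := by
  induction h with
  | single h => exact h.2
  | tail _ h ih => exact ih.trans h.2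

lemma step_swap {u : Equiv.Perm (Fin n)} {a b : Fin n} (hab : a < b) (huv : u a < u b) :
    bruhatStep u (u * Equiv.swap a b) := by
  refine ⟨⟨a, b, hab.ne, rfl⟩, ?_⟩
  have h1 := len_eq hab huv
  have h2 := cA'_le_cA hab huv
  omega

end BruhatAux2

/-- Characterization of Bruhat coverings via the Lehmer code: `w` covers `w' = w·(i,j)`
iff (a1) `α'ᵢ ≤ αᵢ - 1`, (a2) `α'ⱼ = αⱼ + αᵢ - α'ᵢ - 1` (stated additively as
`α'ⱼ + α'ᵢ + 1 = αⱼ + αᵢ`), (a3) `α'ₖ = αₖ` for `k ≠ i, j`, and (a4)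
`M_{i,j}(w) = M_{i,j}(w') = α'ᵢ - αⱼ` (stated additively). -/
theorem bruhat_covers_iff_code {n : ℕ} (w w' : Equiv.Perm (Fin n)) (i j : Fin n)
    (hij : i < j) (hw' : w' = w * Equiv.swap i j) :
    bruhatCovers w w' ↔
      (permCode w' i + 1 ≤ permCode w i ∧
       permCode w' j + permCode w' i + 1 = permCode w j + permCode w i ∧
       (∀ k : Fin n, k ≠ i → k ≠ j → permCode w' k = permCode w k) ∧
       (Mmat w i (j : ℕ) = Mmat w' i (j : ℕ) ∧
        Mmat w i (j : ℕ) + permCode w j = permCode w' i)) := by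
  open BruhatAux BruhatAux2 in
  have hww : w = w' * Equiv.swap i j := by
    rw [hw', mul_assoc, Equiv.swap_mul_self, mul_one]
  rcases lt_trichotomy (w i) (w j) with hlt|heq|hgt
  · -- w i < w j : both sides false
    have hlen := len_eq (u := w) hij hlt
    rw [← hw'] at hlen
    have hA := cA'_le_cA (u := w) hij hlt
    have hC := cC_le (u := w) hij hlt
    have e1 := code_a_v (u := w) hij hlt
    rw [← hw'] at e1
    have e3 := code_a_u (u := w) hij hlt
    have e6 : (∑ k, if j < k ∧ w k < w j then 1 else 0) = permCode w j :=
      (permCode_eq_sum w j).symm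
    constructor
    · intro hcov
      have := bruhatLT_len hcov.1
      omega
    · rintro ⟨h1, -, -, -⟩
      omega
  · exact absurd (w.injective heq) hij.ne
  · -- w j < w i : the interesting case
    have hset1 : w' i = w j := by rw [hw']; exact v_apply_a
    have hset2 : w' j = w i := by rw [hw']; exact v_apply_b
    have huv' : w' i < w' j := by rw [hset1, hset2]; exact hgt
    have F1 := code_a_v (u := w') hij huv'
    rw [← hww] at F1
    have F2 := code_b_v (u := w') hij huv'
    rw [← hww] at F2
    have F3 := code_a_u (u := w') hij huv'
    have F4 := cA'_le_cA (u := w') hij huv'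
    have F5 := cC_le (u := w') hij huv'
    have F6 := A_eq_iff (u := w') hij huv'
    have F7 := len_eq (u := w') hij huv'
    rw [← hww] at F7
    have e6 : (∑ k, if j < k ∧ w' k < w' j then 1 else 0) = permCode w' j :=
      (permCode_eq_sum w' j).symm
    have F8 : Mmat w i (j : ℕ) = ∑ k, if i < k ∧ k < j ∧ w' k < w' j then 1 else 0 := by
      rw [Mmat_eq_sum]
      refine Finset.sum_congr rfl fun k _ => ?_
      by_cases hk : i < k ∧ k < j
      · rw [hset2, hw', v_apply_ne hk.1.ne' hk.2.ne]
      · rw [not_and_or] at hk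
        rcases hk with h|h <;> simp [h]
    -- both sides are equivalent to S_A = Mmat w' i j
    have main : bruhatCovers w w' ↔
        (∑ k, if i < k ∧ k < j ∧ w' k < w' j then 1 else 0) = Mmat w' i (j : ℕ) := by
      constructor
      · intro hcov
        by_contra hne
        have hex : ∃ k, i < k ∧ k < j ∧ (w' i < w' k ∧ w' k < w' j) := by
          by_contra hall
          push_neg at hall
          exact hne (F6.2 fun k hk1 hk2 hv => absurd hv.2 (not_lt.2 (hall k hk1 hk2 hv.1)))
        obtain ⟨k, hik, hkj, hv1, hv2⟩ := hex
        set z1 := w' * Equiv.swap i k with hz1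
        set z2 := z1 * Equiv.swap k j with hz2
        have step1 : bruhatStep w' z1 := step_swap hik hv1
        have hz1k : z1 k = w' i := v_apply_b
        have hz1j : z1 j = w' j := v_apply_ne hij.ne' hkj.ne'
        have step2 : bruhatStep z1 z2 :=
          step_swap hkj (by rw [hz1k, hz1j]; exact huv')
        have hz2i : z2 i = w' k := by
          rw [hz2, v_apply_ne hik.ne hij.ne, hz1]
          exact v_apply_a
        have hz2k : z2 k = w' j := by
          have : z2 k = z1 j := v_apply_a
          rw [this, hz1j]
        have hzw : z2 * Equiv.swap i k = w := by
          have hs : Equiv.swap i k * (Equiv.swap k j * Equiv.swap i k) = Equiv.swap i j := by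
            have h0 := Equiv.swap_mul_swap_mul_swap (hkj.ne' : j ≠ k) (hij.ne' : j ≠ i)
            rw [Equiv.swap_comm k i, Equiv.swap_comm j k] at h0
            rw [← mul_assoc]
            exact h0
          rw [hz2, hz1, hww, mul_assoc, mul_assoc, hs]
        have step3 : bruhatStep z2 w := by
          have := step_swap hik (by rw [hz2i, hz2k]; exact hv2)
          rwa [hzw] at this
        exact hcov.2 z1 (Relation.TransGen.single step1)
          (Relation.TransGen.head step2 (Relation.TransGen.single step3))
      · intro hSA
        constructor
        · exact Relation.TransGen.single ⟨⟨i, j, hij.ne, hww⟩, by omega⟩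
        · intro z h1 h2
          have l1 := bruhatLT_len h1
          have l2 := bruhatLT_len h2
          omega
    rw [main]
    constructor
    · intro hSA
      refine ⟨by omega, by omega, ?_, by omega, by omega⟩
      intro k hki hkj
      rcases lt_trichotomy k i with h|h|h
      · have := code_small (u := w') hij huv' h
        rw [← hww] at this
        exact this.symm
      · exact absurd h hki
      · rcases lt_trichotomy k j with h2|h2|h2
        · have hm := code_mid (u := w') hij huv' h h2
          rw [← hww] at hm
          have hnb := F6.1 hSA k h h2
          have hne1 : w' k ≠ w' i := fun hc => hki (w'.injective hc)
          have hne2 : w' k ≠ w' j := fun hc => hkj (w'.injective hc)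
          by_cases hc : w' i < w' k
          · have h3 : w' j < w' k := (hne2.lt_or_gt).resolve_left fun hc2 => hnb ⟨hc, hc2⟩
            rw [if_pos h3, if_pos hc] at hm
            omega
          · have h4 : w' k < w' i := (hne1.lt_or_gt).resolve_right hc
            have h5 : ¬ w' j < w' k := fun hc2 => absurd (h4.trans huv') hc2.asymm
            rw [if_neg h5, if_neg hc] at hm
            omega
        · exact absurd h2 hkj
        · have := code_big (u := w') hij huv' h2
          rw [← hww] at this
          exact this.symm
    · rintro ⟨-, -, -, h4, -⟩
      omega
end

section
/- Suppose w covers w' in Bruhat order with w' = w·(i,j), codes α and α'. Then the row-reading reduced word of w, after deleting its letter at position I = (α_1 + ⋯ + α_i) − α'_i, yields a reduced word for w'. -/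
/-- The simple transposition `s_a = (a, a+1)` (0-based) in `S_n`. -/
def simpleT (n : ℕ) (a : ℕ) : Equiv.Perm (Fin n) :=
  if h : a + 1 < n then Equiv.swap ⟨a, Nat.lt_of_succ_lt h⟩ ⟨a + 1, h⟩ else 1

/-- The `i`-th row word of the row-reading of `w` (0-based): the reflections
`s_{i+αᵢ-1}, s_{i+αᵢ-2}, …, s_i` where `αᵢ = permCode w i`. -/
def rowWord {n : ℕ} (w : Equiv.Perm (Fin n)) (i : Fin n) : List (Equiv.Perm (Fin n)) :=
  (List.range (permCode w i)).map (fun m => simpleT n ((i : ℕ) + permCode w i - 1 - m))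

/-- The row-reading word of `w`: the concatenation `R₁ R₂ ⋯ R_{n-1}`. -/
def rowReading {n : ℕ} (w : Equiv.Perm (Fin n)) : List (Equiv.Perm (Fin n)) :=
  (List.finRange n).flatMap (rowWord w)

lemma swap_val {n : ℕ} (a b x : Fin n) :
    ((Equiv.swap a b) x : ℕ) =
      if (x:ℕ) = (a:ℕ) then (b:ℕ) else if (x:ℕ) = (b:ℕ) then (a:ℕ) else (x:ℕ) := by
  simp only [Equiv.swap_apply_def]
  split_ifs <;> simp_all [Fin.ext_iff]

lemma simpleT_apply_val {n a : ℕ} (h : a + 1 < n) (x : Fin n) :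
    ((simpleT n a) x : ℕ) =
      if (x:ℕ) = a then a + 1 else if (x:ℕ) = a + 1 then a else (x:ℕ) := by
  rw [simpleT, dif_pos h, swap_val]

def cyc (n i : ℕ) : ℕ → Equiv.Perm (Fin n)
  | 0 => 1
  | a+1 => simpleT n (i+a) * cyc n i a

lemma cyc_apply {n i : ℕ} : ∀ {a : ℕ}, i + a < n → ∀ x : Fin n,
    ((cyc n i a) x : ℕ) =
      if (x:ℕ) = i then i + a else if i < (x:ℕ) ∧ (x:ℕ) ≤ i + a then (x:ℕ) - 1 else (x:ℕ)
  | 0, _, x => by simp [cyc]; split_ifs <;> omega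
  | a+1, h, x => by
    have h' : i + a < n := by omega
    have IH := cyc_apply h' x
    show ((simpleT n (i+a)) ((cyc n i a) x) : ℕ) = _
    rw [simpleT_apply_val (by omega), IH]
    have hx : (x:ℕ) < n := x.isLt
    split_ifs <;> omega

lemma cyc_inv_apply {n i a : ℕ} (h : i + a < n) (x : Fin n) :
    (((cyc n i a)⁻¹) x : ℕ) =
      if (x:ℕ) = i + a then i else if i ≤ (x:ℕ) ∧ (x:ℕ) < i + a then (x:ℕ) + 1 else (x:ℕ) := by
  have key := cyc_apply h ((cyc n i a)⁻¹ x)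
  rw [show ∀ (f : Equiv.Perm (Fin n)) (y : Fin n), f (f⁻¹ y) = y from fun f y => f.apply_symm_apply y] at key
  have hy : (((cyc n i a)⁻¹ x) : ℕ) < n := ((cyc n i a)⁻¹ x).isLt
  have hx : (x:ℕ) < n := x.isLt
  split_ifs at key ⊢ <;> omega

lemma card_filter_val_lt (n t : ℕ) (h : t ≤ n) :
    (Finset.univ.filter (fun q : Fin n => (q:ℕ) < t)).card = t := by
  refine (Finset.card_bij (s := Finset.univ.filter (fun q : Fin n => (q:ℕ) < t))
    (t := Finset.range t) (fun q _ => (q:ℕ)) ?_ ?_ ?_).trans (Finset.card_range t)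
  · intro q hq; simp at hq ⊢; omega
  · intro q hq q' hq' hqq; exact Fin.ext hqq
  · intro x hx
    simp at hx
    exact ⟨⟨x, by omega⟩, by simp [hx], rfl⟩


lemma fix_lt_ge {n : ℕ} {u : Equiv.Perm (Fin n)} {t : ℕ}
    (hu : ∀ m : Fin n, (m:ℕ) < t → u m = m) {m : Fin n} (hm : t ≤ (m:ℕ)) :
    t ≤ (u m : ℕ) := by
  by_contra h
  push_neg at h
  have h2 := hu (u m) h
  have := u.injective h2
  rw [← this] at hm
  omega

lemma val_eq_add_card {n : ℕ} {u : Equiv.Perm (Fin n)} {t : ℕ}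
    (hu : ∀ m : Fin n, (m:ℕ) < t → u m = m) {m : Fin n} (hm : t ≤ (m:ℕ)) :
    (u m : ℕ) = t + (Finset.univ.filter (fun q : Fin n => t ≤ (q:ℕ) ∧ u q < u m)).card := by
  have hum : t ≤ (u m : ℕ) := fix_lt_ge hu hm
  have hS : (Finset.univ.filter (fun q : Fin n => u q < u m)).card = (u m : ℕ) := by
    refine (Finset.card_bij (s := Finset.univ.filter (fun q : Fin n => u q < u m))
      (t := Finset.range (u m : ℕ)) (fun q _ => ((u q : ℕ))) ?_ ?_ ?_).trans
      (Finset.card_range _)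
    · intro q hq; simp at hq ⊢; exact hq
    · intro q hq q' hq' hqq
      exact u.injective (Fin.ext hqq)
    · intro x hx
      simp at hx
      refine ⟨u⁻¹ ⟨x, by omega⟩, ?_, by simp⟩
      simp only [Finset.mem_filter, Finset.mem_univ, true_and, show ∀ (f : Equiv.Perm (Fin n)) (y : Fin n), f (f⁻¹ y) = y from fun f y => f.apply_symm_apply y,
        Fin.lt_def]
      exact hx
  have split := Finset.card_filter_add_card_filter_not
    (s := Finset.univ.filter (fun q : Fin n => u q < u m)) (fun q : Fin n => (q:ℕ) < t)
  rw [Finset.filter_filter, Finset.filter_filter] at split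
  have e1 : Finset.filter (fun q : Fin n => u q < u m ∧ (q:ℕ) < t) Finset.univ
      = Finset.filter (fun q : Fin n => (q:ℕ) < t) Finset.univ := by
    apply Finset.filter_congr
    intro q _
    constructor
    · exact fun h => h.2
    · intro h
      refine ⟨?_, h⟩
      rw [Fin.lt_def, hu q h]
      omega
  have e2 : Finset.filter (fun q : Fin n => u q < u m ∧ ¬ (q:ℕ) < t) Finset.univ
      = Finset.filter (fun q : Fin n => t ≤ (q:ℕ) ∧ u q < u m) Finset.univ := by
    apply Finset.filter_congr
    intro q _
    constructor
    · exact fun h => ⟨by omega, h.1⟩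
    · exact fun h => ⟨h.2, by omega⟩
  rw [e1, e2, card_filter_val_lt n t (by omega : t ≤ n), hS] at split
  omega



section
variable {n : ℕ} {u : Equiv.Perm (Fin n)} {t : ℕ}

lemma code_at_fix (ht : t < n) (hu : ∀ m : Fin n, (m:ℕ) < t → u m = m) :
    (u ⟨t, ht⟩ : ℕ) = t + permCode u ⟨t, ht⟩ := by
  have hv : ((⟨t, ht⟩ : Fin n) : ℕ) = t := rfl
  rw [val_eq_add_card hu (le_refl t)]
  congr 2
  apply Finset.filter_congr
  intro q _
  simp only [Fin.lt_def]
  constructor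
  · rintro ⟨h1, h2⟩
    refine ⟨?_, h2⟩
    rcases Nat.lt_or_ge t (q:ℕ) with h | h
    · exact h
    · exfalso; have : q = ⟨t, ht⟩ := Fin.ext (by omega)
      rw [this] at h2; exact lt_irrefl _ h2
  · rintro ⟨h1, h2⟩; exact ⟨by omega, h2⟩

lemma code_bound_fix (ht : t < n) (hu : ∀ m : Fin n, (m:ℕ) < t → u m = m) :
    t + permCode u ⟨t, ht⟩ < n := by
  rw [← code_at_fix ht hu]; exact (u ⟨t, ht⟩).isLt

lemma ne_top_val (ht : t < n) (hu : ∀ m : Fin n, (m:ℕ) < t → u m = m)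
    {k : Fin n} (hk : t < (k:ℕ)) : (u k : ℕ) ≠ t + permCode u ⟨t, ht⟩ := by
  intro h
  have : u k = u ⟨t, ht⟩ := Fin.ext (by rw [h, code_at_fix ht hu])
  have := u.injective this
  rw [this] at hk
  exact lt_irrefl _ hk

lemma step_fix (ht : t < n) (hu : ∀ m : Fin n, (m:ℕ) < t → u m = m) :
    ∀ m : Fin n, (m:ℕ) < t + 1 → ((cyc n t (permCode u ⟨t, ht⟩))⁻¹ * u) m = m := by
  intro m hm
  have hv : ((⟨t, ht⟩ : Fin n) : ℕ) = t := rfl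
  have hb := code_bound_fix ht hu
  rcases Nat.lt_or_ge (m:ℕ) t with h | h
  · have h1 : u m = m := hu m h
    apply Fin.ext
    rw [Equiv.Perm.mul_apply, h1, cyc_inv_apply hb]
    split_ifs <;> omega
  · have hmt : m = ⟨t, ht⟩ := Fin.ext (by omega)
    subst hmt
    apply Fin.ext
    rw [Equiv.Perm.mul_apply, cyc_inv_apply hb, code_at_fix ht hu]
    simp

lemma step_order (ht : t < n) (hu : ∀ m : Fin n, (m:ℕ) < t → u m = m)
    {k l : Fin n} (hk : t < (k:ℕ)) (hl : t < (l:ℕ)) :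
    ((cyc n t (permCode u ⟨t, ht⟩))⁻¹ * u) k < ((cyc n t (permCode u ⟨t, ht⟩))⁻¹ * u) l
      ↔ u k < u l := by
  have hb := code_bound_fix ht hu
  have huk : t ≤ (u k : ℕ) := fix_lt_ge hu (le_of_lt hk)
  have hul : t ≤ (u l : ℕ) := fix_lt_ge hu (le_of_lt hl)
  have hnk := ne_top_val ht hu hk
  have hnl := ne_top_val ht hu hl
  simp only [Fin.lt_def, Equiv.Perm.mul_apply, cyc_inv_apply hb]
  split_ifs <;> omega

lemma step_code (ht : t < n) (hu : ∀ m : Fin n, (m:ℕ) < t → u m = m)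
    {k : Fin n} (hk : t < (k:ℕ)) :
    permCode ((cyc n t (permCode u ⟨t, ht⟩))⁻¹ * u) k = permCode u k := by
  unfold permCode
  congr 1
  apply Finset.filter_congr
  intro q _
  constructor
  · rintro ⟨h1, h2⟩
    have hq : t < (q:ℕ) := by rw [Fin.lt_def] at h1; omega
    exact ⟨h1, (step_order ht hu hq hk).mp h2⟩
  · rintro ⟨h1, h2⟩
    have hq : t < (q:ℕ) := by rw [Fin.lt_def] at h1; omega
    exact ⟨h1, (step_order ht hu hq hk).mpr h2⟩

lemma inv_fst_ge (hu : ∀ m : Fin n, (m:ℕ) < t → u m = m)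
    {p : Fin n × Fin n} (h1 : p.1 < p.2) (h2 : u p.2 < u p.1) : t ≤ (p.1:ℕ) := by
  by_contra h
  push_neg at h
  have e1 : u p.1 = p.1 := hu p.1 h
  rw [e1] at h2
  have h3 : (u p.2 : ℕ) < t := by rw [Fin.lt_def] at h2; omega
  have e2 : u (u p.2) = u p.2 := hu _ h3
  have e2' := u.injective e2
  rw [← e2'] at h1
  exact absurd h1 (not_lt_of_gt h2)

lemma step_len (ht : t < n) (hu : ∀ m : Fin n, (m:ℕ) < t → u m = m) :
    permLen u = permCode u ⟨t, ht⟩ + permLen ((cyc n t (permCode u ⟨t, ht⟩))⁻¹ * u) := by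
  have hv : ((⟨t, ht⟩ : Fin n) : ℕ) = t := rfl
  set u1 := (cyc n t (permCode u ⟨t, ht⟩))⁻¹ * u with hu1
  have split := Finset.card_filter_add_card_filter_not
    (s := Finset.univ.filter (fun p : Fin n × Fin n => p.1 < p.2 ∧ u p.2 < u p.1))
    (fun p : Fin n × Fin n => p.1 = ⟨t, ht⟩)
  rw [Finset.filter_filter, Finset.filter_filter] at split
  have c1 : (Finset.univ.filter
      (fun p : Fin n × Fin n => (p.1 < p.2 ∧ u p.2 < u p.1) ∧ p.1 = ⟨t, ht⟩)).card
      = permCode u ⟨t, ht⟩ := by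
    apply Finset.card_bij (t := Finset.univ.filter
      (fun k : Fin n => (⟨t, ht⟩ : Fin n) < k ∧ u k < u ⟨t, ht⟩)) (fun p _ => p.2)
    · intro p hp
      simp only [Finset.mem_filter, Finset.mem_univ, true_and] at hp ⊢
      obtain ⟨⟨h1, h2⟩, h3⟩ := hp
      rw [h3] at h1 h2
      exact ⟨h1, h2⟩
    · intro p hp q hq hpq
      simp only [Finset.mem_filter, Finset.mem_univ, true_and] at hp hq
      exact Prod.ext (hp.2.trans hq.2.symm) hpq
    · intro k hk
      simp only [Finset.mem_filter, Finset.mem_univ, true_and] at hk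
      exact ⟨(⟨t, ht⟩, k), by simp [hk.1, hk.2], rfl⟩
  have c2 : Finset.univ.filter
      (fun p : Fin n × Fin n => (p.1 < p.2 ∧ u p.2 < u p.1) ∧ ¬ p.1 = ⟨t, ht⟩)
      = Finset.univ.filter (fun p : Fin n × Fin n => p.1 < p.2 ∧ u1 p.2 < u1 p.1) := by
    ext p
    simp only [Finset.mem_filter, Finset.mem_univ, true_and]
    constructor
    · rintro ⟨⟨h1, h2⟩, h3⟩
      have h4 : t ≤ (p.1 : ℕ) := inv_fst_ge hu h1 h2
      have h5 : t < (p.1 : ℕ) := by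
        rcases Nat.lt_or_ge t (p.1:ℕ) with h | h
        · exact h
        · exact absurd (Fin.ext (by omega) : p.1 = ⟨t, ht⟩) h3
      have h6 : t < (p.2 : ℕ) := by rw [Fin.lt_def] at h1; omega
      exact ⟨h1, (step_order ht hu h6 h5).mpr h2⟩
    · rintro ⟨h1, h2⟩
      have h4 : t + 1 ≤ (p.1 : ℕ) := inv_fst_ge (step_fix ht hu) h1 h2
      have h6 : t < (p.2 : ℕ) := by rw [Fin.lt_def] at h1; omega
      refine ⟨⟨h1, (step_order ht hu h6 (by omega)).mp h2⟩, ?_⟩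
      intro hh
      rw [hh] at h4
      simp at h4
    -- done
  rw [c1, c2] at split
  unfold permLen
  omega

end


lemma rowWordAux_prod {n : ℕ} : ∀ (a t : ℕ),
    ((List.range a).map (fun m => simpleT n (t + a - 1 - m))).prod = cyc n t a
  | 0, t => by simp [cyc]
  | a+1, t => by
    rw [List.range_succ_eq_map]
    simp only [List.map_cons, List.map_map, List.prod_cons]
    have e1 : t + (a + 1) - 1 - 0 = t + a := by omega
    have e2 : ((fun m => simpleT n (t + (a + 1) - 1 - m)) ∘ Nat.succ)
        = fun m => simpleT n (t + a - 1 - m) := by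
      funext m
      simp only [Function.comp_apply]
      congr 1
      omega
    rw [e1, e2, rowWordAux_prod a t]
    rfl

lemma rowWord_eq {n : ℕ} {u v : Equiv.Perm (Fin n)} {k : Fin n}
    (h : permCode u k = permCode v k) : rowWord u k = rowWord v k := by
  unfold rowWord
  rw [h]

lemma rowWord_mk_prod {n : ℕ} (u : Equiv.Perm (Fin n)) (t : ℕ) (ht : t < n) :
    (rowWord u ⟨t, ht⟩).prod = cyc n t (permCode u ⟨t, ht⟩) := by
  unfold rowWord
  exact rowWordAux_prod _ t

def listFrom {n : ℕ} (t : ℕ) (u : Equiv.Perm (Fin n)) : List (Equiv.Perm (Fin n)) :=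
  ((List.finRange n).drop t).flatMap (rowWord u)

lemma mem_drop_finRange {n t : ℕ} {k : Fin n} (h : k ∈ (List.finRange n).drop t) :
    t ≤ (k:ℕ) := by
  rw [List.mem_iff_getElem] at h
  obtain ⟨m, hm, he⟩ := h
  rw [List.getElem_drop] at he
  rw [← he]
  simp

lemma flatMap_congr {α β : Type*} {l : List α} {f g : α → List β}
    (h : ∀ x ∈ l, f x = g x) : l.flatMap f = l.flatMap g := by
  induction l with
  | nil => rfl
  | cons a l ih =>
    rw [List.flatMap_cons, List.flatMap_cons, h a (by simp), ih (fun x hx => h x (by simp [hx]))]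

lemma permLen_one {n : ℕ} : permLen (1 : Equiv.Perm (Fin n)) = 0 := by
  unfold permLen
  rw [Finset.card_eq_zero]
  ext p
  simp only [Finset.mem_filter, Finset.mem_univ, true_and, Finset.notMem_empty, iff_false]
  rintro ⟨h1, h2⟩
  simp at h2
  exact absurd h1 (not_lt_of_gt h2)

lemma structT_base {n : ℕ} {t : ℕ} (htn : n ≤ t) (u : Equiv.Perm (Fin n))
    (hu : ∀ m : Fin n, (m:ℕ) < t → u m = m) :
    (listFrom t u).prod = u ∧ (listFrom t u).length = permLen u := by
  have hnil : (List.finRange n).drop t = [] := by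
    apply List.drop_eq_nil_of_le
    simp [htn]
  have hu1 : u = 1 := by
    apply Equiv.ext
    intro m
    simpa using hu m (lt_of_lt_of_le m.isLt htn)
  rw [listFrom, hnil]
  subst hu1
  simp [permLen_one]

theorem structT {n : ℕ} : ∀ (d t : ℕ), n ≤ t + d → ∀ u : Equiv.Perm (Fin n),
    (∀ m : Fin n, (m:ℕ) < t → u m = m) →
    (listFrom t u).prod = u ∧ (listFrom t u).length = permLen u
  | 0, t, hd, u, hu => structT_base (by omega) u hu
  | d+1, t, hd, u, hu => by
    rcases Nat.lt_or_ge t n with ht | ht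
    swap
    · exact structT_base ht u hu
    have hdrop : (List.finRange n).drop t = ⟨t, ht⟩ :: (List.finRange n).drop (t+1) := by
      rw [List.drop_eq_getElem_cons (by simp [ht])]
      congr 1
      rw [List.getElem_finRange]
      rfl
    set a := permCode u ⟨t, ht⟩ with ha
    set u1 := (cyc n t a)⁻¹ * u with hu1
    have hfix1 := step_fix ht hu
    have IH := structT d (t+1) (by omega) u1 hfix1
    have hsame : listFrom (t+1) u = listFrom (t+1) u1 := by
      apply flatMap_congr
      intro k hk
      have := mem_drop_finRange hk
      exact (rowWord_eq (step_code ht hu (by omega)).symm)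
    have hsplit : listFrom t u = rowWord u ⟨t, ht⟩ ++ listFrom (t+1) u := by
      rw [listFrom, hdrop, List.flatMap_cons]
      rfl
    constructor
    · rw [hsplit, List.prod_append, hsame, IH.1, rowWord_mk_prod u t ht, hu1, ← ha]
      group
    · rw [hsplit, List.length_append, hsame, IH.2, step_len ht hu]
      congr 1
      unfold rowWord
      simp


lemma code_eq_of_order {n : ℕ} {v w : Equiv.Perm (Fin n)} {t : ℕ}
    (ho : ∀ k l : Fin n, t ≤ (k:ℕ) → t ≤ (l:ℕ) → (v k < v l ↔ w k < w l))
    {k : Fin n} (hk : t ≤ (k:ℕ)) : permCode v k = permCode w k := by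
  unfold permCode
  congr 1
  apply Finset.filter_congr
  intro q _
  constructor
  · rintro ⟨h1, h2⟩
    exact ⟨h1, (ho q k (by rw [Fin.lt_def] at h1; omega) hk).mp h2⟩
  · rintro ⟨h1, h2⟩
    exact ⟨h1, (ho q k (by rw [Fin.lt_def] at h1; omega) hk).mpr h2⟩

theorem chainLemma {n : ℕ} (w : Equiv.Perm (Fin n)) :
    ∀ t : ℕ, t ≤ n → ∃ v : Equiv.Perm (Fin n),
      (∀ m : Fin n, (m:ℕ) < t → v m = m) ∧
      (∀ k l : Fin n, t ≤ (k:ℕ) → t ≤ (l:ℕ) → (v k < v l ↔ w k < w l))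
  | 0, _ => ⟨w, fun m hm => absurd hm (by omega), fun k l _ _ => Iff.rfl⟩
  | t+1, ht1 => by
    have ht : t < n := by omega
    obtain ⟨v, hfix, ho⟩ := chainLemma w t (by omega)
    refine ⟨(cyc n t (permCode v ⟨t, ht⟩))⁻¹ * v, step_fix ht hfix, ?_⟩
    intro k l hk hl
    rw [step_order ht hfix (by omega) (by omega)]
    exact ho k l (by omega) (by omega)


lemma adj_pair_lt {n : ℕ} {a b x y : Fin n} (hab : (b:ℕ) = (a:ℕ) + 1) (hxy : x < y)
    (hne : ¬((x:ℕ) = (a:ℕ) ∧ (y:ℕ) = (b:ℕ))) :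
    Equiv.swap a b x < Equiv.swap a b y := by
  rw [Fin.lt_def] at hxy ⊢
  rw [swap_val, swap_val]
  split_ifs <;> omega

lemma adj_up {n : ℕ} (u : Equiv.Perm (Fin n)) (a b : Fin n) (hab : (b:ℕ) = (a:ℕ) + 1)
    (h : u a < u b) : permLen (u * Equiv.swap a b) = permLen u + 1 := by
  have hab' : a < b := by rw [Fin.lt_def]; omega
  have hanb : a ≠ b := ne_of_lt hab'
  set σ := Equiv.swap a b with hσ
  set v := u * σ with hv
  have happ : ∀ x : Fin n, v (σ x) = u x := by
    intro x
    rw [hv, Equiv.Perm.mul_apply, Equiv.swap_apply_self]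
  have hmem : (a, b) ∈ Finset.univ.filter
      (fun p : Fin n × Fin n => p.1 < p.2 ∧ v p.2 < v p.1) := by
    simp only [Finset.mem_filter, Finset.mem_univ, true_and]
    refine ⟨hab', ?_⟩
    have e1 : v b = u a := by rw [hv, Equiv.Perm.mul_apply, Equiv.swap_apply_right]
    have e2 : v a = u b := by rw [hv, Equiv.Perm.mul_apply, Equiv.swap_apply_left]
    rw [e1, e2]; exact h
  have hbij : permLen u = ((Finset.univ.filter
      (fun p : Fin n × Fin n => p.1 < p.2 ∧ v p.2 < v p.1)).erase (a, b)).card := by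
    apply Finset.card_bij (fun p _ => (σ p.1, σ p.2))
    · intro p hp
      simp only [Finset.mem_filter, Finset.mem_univ, true_and] at hp
      obtain ⟨h1, h2⟩ := hp
      have hne : ¬((p.1:ℕ) = (a:ℕ) ∧ (p.2:ℕ) = (b:ℕ)) := by
        rintro ⟨e1, e2⟩
        have : p.1 = a := Fin.ext e1
        have : p.2 = b := Fin.ext e2
        rw [‹p.1 = a›, ‹p.2 = b›] at h2
        exact absurd h (not_lt_of_gt h2)
      rw [Finset.mem_erase]
      constructor
      · intro hcon
        have e1 : σ p.1 = a := congrArg Prod.fst hcon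
        have e2 : σ p.2 = b := congrArg Prod.snd hcon
        have : p.1 = σ a := by rw [← e1, Equiv.swap_apply_self]
        rw [Equiv.swap_apply_left] at this
        have h2' : p.2 = σ b := by rw [← e2, Equiv.swap_apply_self]
        rw [Equiv.swap_apply_right] at h2'
        rw [this, h2'] at h1
        exact absurd hab' (not_lt_of_gt h1)
      · simp only [Finset.mem_filter, Finset.mem_univ, true_and]
        refine ⟨adj_pair_lt hab h1 hne, ?_⟩
        rw [happ, happ]; exact h2
    · intro p hp q hq hpq
      have e1 : σ p.1 = σ q.1 := congrArg Prod.fst hpq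
      have e2 : σ p.2 = σ q.2 := congrArg Prod.snd hpq
      exact Prod.ext (σ.injective e1) (σ.injective e2)
    · intro q hq
      rw [Finset.mem_erase] at hq
      obtain ⟨hq1, hq2⟩ := hq
      simp only [Finset.mem_filter, Finset.mem_univ, true_and] at hq2
      obtain ⟨h1, h2⟩ := hq2
      refine ⟨(σ q.1, σ q.2), ?_, ?_⟩
      · simp only [Finset.mem_filter, Finset.mem_univ, true_and]
        have hne : ¬((q.1:ℕ) = (a:ℕ) ∧ (q.2:ℕ) = (b:ℕ)) := by
          rintro ⟨e1, e2⟩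
          exact hq1 (Prod.ext (Fin.ext e1) (Fin.ext e2))
        refine ⟨adj_pair_lt hab h1 hne, ?_⟩
        have e1 : u (σ q.1) = v (σ (σ q.1)) := by rw [happ]
        have e2 : u (σ q.2) = v (σ (σ q.2)) := by rw [happ]
        rw [e1, e2, hσ, Equiv.swap_apply_self, Equiv.swap_apply_self]
        exact h2
      · rw [hσ]
        simp [Equiv.swap_apply_self]
  have hcard := Finset.card_erase_of_mem hmem
  have hpos : 0 < (Finset.univ.filter
      (fun p : Fin n × Fin n => p.1 < p.2 ∧ v p.2 < v p.1)).card :=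
    Finset.card_pos.mpr ⟨(a, b), hmem⟩
  show (Finset.univ.filter (fun p : Fin n × Fin n => p.1 < p.2 ∧ v p.2 < v p.1)).card
    = permLen u + 1
  omega

lemma adj_down {n : ℕ} (u : Equiv.Perm (Fin n)) (a b : Fin n) (hab : (b:ℕ) = (a:ℕ) + 1)
    (h : u b < u a) : permLen u = permLen (u * Equiv.swap a b) + 1 := by
  have := adj_up (u * Equiv.swap a b) a b hab (by
    rw [Equiv.Perm.mul_apply, Equiv.Perm.mul_apply, Equiv.swap_apply_left,
      Equiv.swap_apply_right]
    exact h)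
  rw [mul_assoc, Equiv.swap_mul_self, mul_one] at this
  omega

lemma adj_cases {n : ℕ} (u : Equiv.Perm (Fin n)) (a b : Fin n) (hab : (b:ℕ) = (a:ℕ) + 1) :
    permLen (u * Equiv.swap a b) = permLen u + 1 ∨
      permLen u = permLen (u * Equiv.swap a b) + 1 := by
  have hanb : a ≠ b := by intro h; rw [h] at hab; omega
  rcases lt_or_gt_of_ne (fun h => hanb (u.injective h) : u a ≠ u b) with h | h
  · exact Or.inl (adj_up u a b hab h)
  · exact Or.inr (adj_down u a b hab h)


section
variable {n : ℕ}

lemma swap_decomp (a b c : Fin n) (hac : a ≠ c) (hcb : c ≠ b) (hab : a ≠ b) :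
    Equiv.swap a b = Equiv.swap a c * Equiv.swap c b * Equiv.swap a c := by
  have key := Equiv.swap_mul_swap_mul_swap (x := b) (y := c) (z := a)
    (Ne.symm hcb) (Ne.symm hab)
  rw [Equiv.swap_comm c a, Equiv.swap_comm b c] at key
  rw [← key]

lemma L2 : ∀ (g : ℕ) (u : Equiv.Perm (Fin n)) (a b : Fin n),
    (b:ℕ) = (a:ℕ) + g + 1 → u a < u b → permLen u < permLen (u * Equiv.swap a b)
  | 0, u, a, b, hab, h => by rw [adj_up u a b (by omega) h]; omega
  | g+1, u, a, b, hab, h => by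
    have hbn : (b:ℕ) < n := b.isLt
    set c : Fin n := ⟨(a:ℕ)+1, by omega⟩ with hc
    have hcv : (c:ℕ) = (a:ℕ)+1 := rfl
    have hac : a ≠ c := by rw [Fin.ne_iff_vne]; omega
    have hcb : c ≠ b := by rw [Fin.ne_iff_vne]; rw [hcv]; omega
    have hab' : a ≠ b := by rw [Fin.ne_iff_vne]; omega
    rw [swap_decomp a b c hac hcb hab', ← mul_assoc, ← mul_assoc]
    set v := u * Equiv.swap a c with hv
    have hvc : v c = u a := by rw [hv, Equiv.Perm.mul_apply, Equiv.swap_apply_right]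
    have hvb : v b = u b := by
      rw [hv, Equiv.Perm.mul_apply, Equiv.swap_apply_of_ne_of_ne (Ne.symm hab') (Ne.symm hcb)]
    have hva : v a = u c := by rw [hv, Equiv.Perm.mul_apply, Equiv.swap_apply_left]
    have IH := L2 g v c b (by omega) (by rw [hvc, hvb]; exact h)
    set v2 := v * Equiv.swap c b with hv2
    have hv2a : v2 a = u c := by
      rw [hv2, Equiv.Perm.mul_apply, Equiv.swap_apply_of_ne_of_ne hac hab', hva]
    have hv2c : v2 c = u b := by rw [hv2, Equiv.Perm.mul_apply, Equiv.swap_apply_left, hvb]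
    have hucua : u c ≠ u a := fun h => hac (u.injective h).symm
    rcases lt_or_gt_of_ne hucua with hca | hca
    · have h1 : permLen u = permLen v + 1 := adj_down u a c (by omega) hca
      have h2 : permLen (v2 * Equiv.swap a c) = permLen v2 + 1 :=
        adj_up v2 a c (by omega) (by rw [hv2a, hv2c]; exact lt_trans hca h)
      omega
    · have h1 : permLen v = permLen u + 1 := adj_up u a c (by omega) hca
      rcases adj_cases v2 a c (by omega) with h2 | h2 <;> omega

lemma L3 : ∀ (g : ℕ) (u : Equiv.Perm (Fin n)) (a b : Fin n),
    (b:ℕ) = (a:ℕ) + g + 1 → u b < u a →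
    (∀ k : Fin n, a < k → k < b → u k < u b ∨ u a < u k) →
    permLen u = permLen (u * Equiv.swap a b) + 1
  | 0, u, a, b, hab, h, _ => adj_down u a b (by omega) h
  | g+1, u, a, b, hab, h, hmid => by
    have hbn : (b:ℕ) < n := b.isLt
    set c : Fin n := ⟨(a:ℕ)+1, by omega⟩ with hc
    have hcv : (c:ℕ) = (a:ℕ)+1 := rfl
    have hac : a ≠ c := by rw [Fin.ne_iff_vne]; omega
    have hcb : c ≠ b := by rw [Fin.ne_iff_vne]; rw [hcv]; omega
    have hab' : a ≠ b := by rw [Fin.ne_iff_vne]; omega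
    rw [swap_decomp a b c hac hcb hab', ← mul_assoc, ← mul_assoc]
    set v := u * Equiv.swap a c with hv
    have hvc : v c = u a := by rw [hv, Equiv.Perm.mul_apply, Equiv.swap_apply_right]
    have hvb : v b = u b := by
      rw [hv, Equiv.Perm.mul_apply, Equiv.swap_apply_of_ne_of_ne (Ne.symm hab') (Ne.symm hcb)]
    have hva : v a = u c := by rw [hv, Equiv.Perm.mul_apply, Equiv.swap_apply_left]
    have hvmid : ∀ k : Fin n, c < k → k < b → v k < v b ∨ v c < v k := by
      intro k hck hkb
      have hka : k ≠ a := by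
        rw [Fin.ne_iff_vne]; rw [Fin.lt_def] at hck; omega
      have hkc : k ≠ c := ne_of_gt hck
      have hvk : v k = u k := by
        rw [hv, Equiv.Perm.mul_apply, Equiv.swap_apply_of_ne_of_ne hka hkc]
      rw [hvk, hvb, hvc]
      exact hmid k (by rw [Fin.lt_def] at hck ⊢; omega) hkb
    have hmidc := hmid c (by rw [Fin.lt_def]; omega) (by rw [Fin.lt_def]; omega)
    have IH := L3 g v c b (by omega) (by rw [hvc, hvb]; exact h) hvmid
    set v2 := v * Equiv.swap c b with hv2
    have hv2a : v2 a = u c := by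
      rw [hv2, Equiv.Perm.mul_apply, Equiv.swap_apply_of_ne_of_ne hac hab', hva]
    have hv2c : v2 c = u b := by rw [hv2, Equiv.Perm.mul_apply, Equiv.swap_apply_left, hvb]
    rcases hmidc with hcb2 | hac2
    · have h1 : permLen u = permLen v + 1 :=
        adj_down u a c (by omega) (lt_trans hcb2 h)
      have h2 : permLen (v2 * Equiv.swap a c) = permLen v2 + 1 :=
        adj_up v2 a c (by omega) (by rw [hv2a, hv2c]; exact hcb2)
      omega
    · have h1 : permLen v = permLen u + 1 := adj_up u a c (by omega) hac2
      have h2 : permLen v2 = permLen (v2 * Equiv.swap a c) + 1 :=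
        adj_down v2 a c (by omega) (by rw [hv2a, hv2c]; exact lt_trans h hac2)
      omega
end


section
variable {n : ℕ}

lemma L2fin (u : Equiv.Perm (Fin n)) {a b : Fin n} (hab : a < b) (h : u a < u b) :
    permLen u < permLen (u * Equiv.swap a b) := by
  rw [Fin.lt_def] at hab
  exact L2 ((b:ℕ) - (a:ℕ) - 1) u a b (by omega) h

lemma L3fin (u : Equiv.Perm (Fin n)) {a b : Fin n} (hab : a < b) (h : u b < u a)
    (hmid : ∀ k : Fin n, a < k → k < b → u k < u b ∨ u a < u k) :
    permLen u = permLen (u * Equiv.swap a b) + 1 := by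
  rw [Fin.lt_def] at hab
  exact L3 ((b:ℕ) - (a:ℕ) - 1) u a b (by omega) h hmid

lemma bruhatLT_len {u v : Equiv.Perm (Fin n)} (h : bruhatLT u v) : permLen u < permLen v := by
  induction h with
  | single hs => exact hs.2
  | tail _ hs ih => exact lt_trans ih hs.2

lemma swap_id3 {i k j : Fin n} (hik : i < k) (hkj : k < j) :
    Equiv.swap i j * Equiv.swap i k * Equiv.swap k j = Equiv.swap i k := by
  have hik' : i ≠ k := ne_of_lt hik
  have hkj' : k ≠ j := ne_of_lt hkj
  have hij' : i ≠ j := ne_of_lt (lt_trans hik hkj)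
  have key := Equiv.swap_mul_swap_mul_swap (x := j) (y := k) (z := i)
    (Ne.symm hkj') (Ne.symm hij')
  rw [Equiv.swap_comm k i, Equiv.swap_comm j k] at key
  rw [← key]
  simp [mul_assoc, Equiv.swap_mul_self, Equiv.swap_mul_self_mul]

theorem main_facts {w w' : Equiv.Perm (Fin n)} {i j : Fin n}
    (hij : i < j) (hw' : w' = w * Equiv.swap i j) (hcov : bruhatCovers w w') :
    w j < w i ∧ (∀ k : Fin n, i < k → k < j → w k < w j ∨ w i < w k) ∧
      permLen w = permLen w' + 1 := by
  have hlen : permLen w' < permLen w := bruhatLT_len hcov.1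
  have hne : w i ≠ w j := fun h => (ne_of_lt hij) (w.injective h)
  have hwij : w j < w i := by
    rcases lt_or_gt_of_ne hne with h | h
    · exfalso
      have := L2fin w hij h
      rw [← hw'] at this
      omega
    · exact h
  have hw'i : w' i = w j := by rw [hw', Equiv.Perm.mul_apply, Equiv.swap_apply_left]
  have hw'j : w' j = w i := by rw [hw', Equiv.Perm.mul_apply, Equiv.swap_apply_right]
  have hmid : ∀ k : Fin n, i < k → k < j → w k < w j ∨ w i < w k := by
    intro k hik hkj
    by_contra hcon
    push_neg at hcon
    obtain ⟨hc1, hc2⟩ := hcon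
    have hki : k ≠ i := ne_of_gt hik
    have hkj' : k ≠ j := ne_of_lt hkj
    have hwk1 : w j < w k := lt_of_le_of_ne hc1 (fun h => hkj' (w.injective h.symm))
    have hwk2 : w k < w i := lt_of_le_of_ne hc2 (fun h => hki (w.injective h))
    have hw'k : w' k = w k := by
      rw [hw', Equiv.Perm.mul_apply, Equiv.swap_apply_of_ne_of_ne hki hkj']
    set z1 := w' * Equiv.swap i k with hz1
    have s1 : bruhatStep w' z1 := by
      refine ⟨⟨i, k, ne_of_lt hik, rfl⟩, ?_⟩
      apply L2fin w' hik
      rw [hw'i, hw'k]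
      exact hwk1
    have hz1k : z1 k = w j := by
      rw [hz1, Equiv.Perm.mul_apply, Equiv.swap_apply_right, hw'i]
    have hz1j : z1 j = w i := by
      rw [hz1, Equiv.Perm.mul_apply,
        Equiv.swap_apply_of_ne_of_ne (Ne.symm (ne_of_lt (lt_trans hik hkj))) (Ne.symm hkj'),
        hw'j]
    set z2 := z1 * Equiv.swap k j with hz2
    have s2 : bruhatStep z1 z2 := by
      refine ⟨⟨k, j, ne_of_lt hkj, rfl⟩, ?_⟩
      apply L2fin z1 hkj
      rw [hz1k, hz1j]
      exact hwij
    have hz2w : z2 = w * Equiv.swap i k := by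
      rw [hz2, hz1, hw', mul_assoc, mul_assoc, ← mul_assoc (Equiv.swap i j),
        swap_id3 hik hkj]
    have hz2i : z2 i = w k := by rw [hz2w, Equiv.Perm.mul_apply, Equiv.swap_apply_left]
    have hz2k : z2 k = w i := by rw [hz2w, Equiv.Perm.mul_apply, Equiv.swap_apply_right]
    have s3 : bruhatStep z2 w := by
      refine ⟨⟨i, k, ne_of_lt hik, ?_⟩, ?_⟩
      · rw [hz2w, mul_assoc, Equiv.swap_mul_self, mul_one]
      · have h4 : z2 * Equiv.swap i k = w := by
          rw [hz2w, mul_assoc, Equiv.swap_mul_self, mul_one]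
        have := L2fin z2 hik (by rw [hz2i, hz2k]; exact hwk2)
        rw [h4] at this
        exact this
    exact hcov.2 z2 (Relation.TransGen.tail (Relation.TransGen.single s1) s2)
      (Relation.TransGen.single s3)
  refine ⟨hwij, hmid, ?_⟩
  have := L3fin w hij hwij hmid
  rw [← hw'] at this
  exact this

lemma code_w' {w w' : Equiv.Perm (Fin n)} {i j : Fin n}
    (hij : i < j) (hw' : w' = w * Equiv.swap i j) (hwij : w j < w i) :
    permCode w' i = (Finset.univ.filter (fun k : Fin n => i < k ∧ w k < w j)).card := by
  unfold permCode
  congr 1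
  apply Finset.filter_congr
  intro k _
  have hw'i : w' i = w j := by rw [hw', Equiv.Perm.mul_apply, Equiv.swap_apply_left]
  by_cases hkj : k = j
  · subst hkj
    have hw'k : w' k = w i := by rw [hw', Equiv.Perm.mul_apply, Equiv.swap_apply_right]
    rw [hw'k, hw'i]
    constructor
    · rintro ⟨_, h2⟩; exact absurd h2 (not_lt_of_gt hwij)
    · rintro ⟨_, h2⟩; exact absurd h2 (lt_irrefl _)
  · by_cases hki : k = i
    · subst hki
      constructor <;> (rintro ⟨h1, _⟩; exact absurd h1 (lt_irrefl _))
    · have hw'k : w' k = w k := by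
        rw [hw', Equiv.Perm.mul_apply, Equiv.swap_apply_of_ne_of_ne hki hkj]
      rw [hw'k, hw'i]

lemma code_w'_lt {w w' : Equiv.Perm (Fin n)} {i j : Fin n}
    (hij : i < j) (hw' : w' = w * Equiv.swap i j) (hwij : w j < w i) :
    permCode w' i < permCode w i := by
  rw [code_w' hij hw' hwij]
  unfold permCode
  apply Finset.card_lt_card
  rw [Finset.ssubset_iff_of_subset]
  · exact ⟨j, by simp [hij, hwij], by simp⟩
  · intro k hk
    simp only [Finset.mem_filter, Finset.mem_univ, true_and] at hk ⊢
    exact ⟨hk.1, lt_trans hk.2 hwij⟩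

lemma code_lt (w : Equiv.Perm (Fin n)) (i : Fin n) : (i:ℕ) + permCode w i < n := by
  have h1 : permCode w i ≤ (Finset.Ioi i).card := by
    apply Finset.card_le_card
    intro k hk
    simp only [Finset.mem_filter, Finset.mem_univ, true_and] at hk
    simp [Finset.mem_Ioi, hk.1]
  rw [Fin.card_Ioi] at h1
  have := i.isLt
  omega
end


lemma mem_take_finRange {n m : ℕ} {k : Fin n} :
    k ∈ (List.finRange n).take m ↔ (k:ℕ) < m := by
  constructor
  · intro h
    rw [List.mem_iff_getElem] at h
    obtain ⟨s, hs, he⟩ := h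
    have hlen : s < min m n := by simpa using hs
    rw [List.getElem_take] at he
    rw [← he]
    simp [List.getElem_finRange]
    omega
  · intro h
    have hkn : (k:ℕ) < n := k.isLt
    rw [List.mem_iff_getElem]
    refine ⟨(k:ℕ), by simp; omega, ?_⟩
    rw [List.getElem_take, List.getElem_finRange]
    apply Fin.ext
    simp

/-- If `w` covers `w' = w·(i,j)` in the Bruhat order, then deleting the letter at
(1-based) position `I = (α₁ + ⋯ + αᵢ) − α'ᵢ` from the row-reading reduced word of `w`
yields a reduced word for `w'`. -/
theorem rowReading_delete_reduced {n : ℕ} (w w' : Equiv.Perm (Fin n)) (i j : Fin n)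
    (hij : i < j) (hw' : w' = w * Equiv.swap i j) (hcov : bruhatCovers w w') :
    ((rowReading w).eraseIdx
        (((∑ k ∈ Finset.univ.filter (fun k : Fin n => k ≤ i), permCode w k)
          - permCode w' i) - 1)).prod = w' ∧
    ((rowReading w).eraseIdx
        (((∑ k ∈ Finset.univ.filter (fun k : Fin n => k ≤ i), permCode w k)
          - permCode w' i) - 1)).length = permLen w' := by
  obtain ⟨hwij, hmid, hlen1⟩ := main_facts hij hw' hcov
  have hij0 : (i:ℕ) < (j:ℕ) := Fin.lt_def.mp hij
  have hjn : (j:ℕ) < n := j.isLt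
  have hin : (i:ℕ) < n := i.isLt
  have hcodeb : (i:ℕ) + permCode w i < n := code_lt w i
  have ha'lt : permCode w' i < permCode w i := code_w'_lt hij hw' hwij
  have hpplt : (i:ℕ) + permCode w' i + 1 < n := by omega
  -- abbreviations
  set E := (((∑ k ∈ Finset.univ.filter (fun k : Fin n => k ≤ i), permCode w k)
          - permCode w' i) - 1) with hEdef
  set d1 := permCode w i - permCode w' i - 1 with hd1
  set P := ((List.finRange n).take (i:ℕ)).flatMap (rowWord w) with hPdef
  set R := rowWord w i with hRdef
  set S := ((List.finRange n).drop ((i:ℕ)+1)).flatMap (rowWord w) with hSdef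
  have hRlen : R.length = permCode w i := by rw [hRdef]; unfold rowWord; simp
  -- sum computation
  have bindlen : ∀ l : List (Fin n), (l.flatMap (rowWord w)).length
      = (l.map (fun k => permCode w k)).sum := by
    intro l
    induction l with
    | nil => rfl
    | cons a l ih =>
      rw [List.flatMap_cons, List.length_append, ih, List.map_cons, List.sum_cons]
      congr 1
      unfold rowWord
      simp
  have hfilter_take : Finset.univ.filter (fun k : Fin n => k ≤ i)
      = ((List.finRange n).take ((i:ℕ)+1)).toFinset := by
    ext k
    simp only [Finset.mem_filter, Finset.mem_univ, true_and, List.mem_toFinset,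
      mem_take_finRange, Fin.le_def]
    omega
  have htake_succ : (List.finRange n).take ((i:ℕ)+1) = (List.finRange n).take (i:ℕ) ++ [i] := by
    rw [List.take_succ]
    congr 1
    rw [List.getElem?_eq_getElem (by simpa using hin)]
    simp [List.getElem_finRange]
  have hsum : (∑ k ∈ Finset.univ.filter (fun k : Fin n => k ≤ i), permCode w k)
      = P.length + permCode w i := by
    rw [hfilter_take, List.sum_toFinset _ (((List.take_sublist _ _)).nodup (List.nodup_finRange n)),
      htake_succ, List.map_append, List.sum_append, hPdef, bindlen]
    simp
  have hEPd : E = P.length + d1 := by omega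
  -- decomposition of the row reading
  have hfr : List.finRange n
      = (List.finRange n).take (i:ℕ) ++ i :: (List.finRange n).drop ((i:ℕ)+1) := by
    conv_lhs => rw [← List.take_append_drop (i:ℕ) (List.finRange n)]
    congr 1
    rw [List.drop_eq_getElem_cons (by simpa using hin)]
    congr 1
    simp [List.getElem_finRange]
  have hL : rowReading w = P ++ (R ++ S) := by
    show (List.finRange n).flatMap (rowWord w) = _
    conv_lhs => rw [hfr]
    rw [List.flatMap_append, List.flatMap_cons]
  have hstruct := structT n 0 (by omega) w (fun m hm => absurd (by omega : ¬ (m:ℕ) < 0) (by simp [hm]))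
  have hLF : listFrom 0 w = rowReading w := by rw [listFrom, List.drop_zero]; rfl
  have hLprod : (rowReading w).prod = w := by rw [← hLF]; exact hstruct.1
  have hLlen : (rowReading w).length = permLen w := by rw [← hLF]; exact hstruct.2
  -- the chain permutation
  obtain ⟨v, hvfix, hvord⟩ := chainLemma w ((i:ℕ)+1) (by omega)
  have hSv : S = listFrom ((i:ℕ)+1) v := by
    rw [hSdef, listFrom]
    apply flatMap_congr
    intro k hk
    exact rowWord_eq (code_eq_of_order hvord (mem_drop_finRange hk)).symm
  have hSprod : S.prod = v := by
    rw [hSv]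
    exact (structT n ((i:ℕ)+1) (by omega) v hvfix).1
  -- row word pieces
  have hd1R : d1 < R.length := by rw [hRlen]; omega
  have hRd1 : ∀ (h : d1 < R.length), R[d1] = simpleT n ((i:ℕ) + permCode w' i) := by
    intro h
    simp only [hRdef, rowWord, List.getElem_map, List.getElem_range]
    congr 1
    omega
  have hRsplit : R = R.take d1 ++ simpleT n ((i:ℕ) + permCode w' i) :: R.drop (d1+1) := by
    conv_lhs => rw [← List.take_append_drop d1 R]
    congr 1
    rw [List.drop_eq_getElem_cons hd1R]
    congr 1
    exact hRd1 hd1R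
  have hRdrop : R.drop (d1+1)
      = (List.range (permCode w' i)).map (fun m => simpleT n ((i:ℕ) + permCode w' i - 1 - m)) := by
    apply List.ext_getElem
    · simp only [List.length_drop, List.length_map, List.length_range, hRlen]
      omega
    · intro m h1 h2
      rw [List.getElem_drop]
      simp only [hRdef, rowWord, List.getElem_map, List.getElem_range]
      simp only [List.length_map, List.length_range] at h2
      congr 1
      omega
  have hdropProd : (R.drop (d1+1)).prod = cyc n (i:ℕ) (permCode w' i) := by
    rw [hRdrop]
    exact rowWordAux_prod _ _
  -- the target permutations
  set pp : Fin n := ⟨(i:ℕ) + permCode w' i, by omega⟩ with hppdef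
  set pp1 : Fin n := ⟨(i:ℕ) + permCode w' i + 1, hpplt⟩ with hpp1def
  have hsimp : simpleT n ((i:ℕ) + permCode w' i) = Equiv.swap pp pp1 := by
    unfold simpleT
    rw [dif_pos hpplt]
  have hvj : v j = pp1 := by
    apply Fin.ext
    have h7 := val_eq_add_card hvfix (show (i:ℕ)+1 ≤ (j:ℕ) by omega)
    have h8 : Finset.univ.filter (fun q : Fin n => (i:ℕ)+1 ≤ (q:ℕ) ∧ v q < v j)
        = Finset.univ.filter (fun q : Fin n => i < q ∧ w q < w j) := by
      apply Finset.filter_congr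
      intro q _
      constructor
      · rintro ⟨h1, h2⟩
        exact ⟨by rw [Fin.lt_def]; omega, (hvord q j (by omega) (by omega)).mp h2⟩
      · rintro ⟨h1, h2⟩
        rw [Fin.lt_def] at h1
        exact ⟨by omega, (hvord q j (by omega) (by omega)).mpr h2⟩
    rw [h8, ← code_w' hij hw' hwij] at h7
    show (v j : ℕ) = (i:ℕ) + permCode w' i + 1
    omega
  set BB := (R.drop (d1+1) ++ S).prod with hBBdef
  have hBB : BB = cyc n (i:ℕ) (permCode w' i) * v := by
    rw [hBBdef, List.prod_append, hdropProd, hSprod]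
  have hBpp : BB⁻¹ pp = i := by
    rw [hBB, mul_inv_rev, Equiv.Perm.mul_apply]
    have c1 : (cyc n (i:ℕ) (permCode w' i))⁻¹ pp = i := by
      apply Fin.ext
      rw [cyc_inv_apply (show (i:ℕ) + permCode w' i < n by omega)]
      have hppv : (pp:ℕ) = (i:ℕ) + permCode w' i := rfl
      rw [hppv, if_pos rfl]
    rw [c1]
    have hvi : v i = i := hvfix i (by omega)
    rw [Equiv.Perm.inv_eq_iff_eq]
    exact hvi.symm
  have hBpp1 : BB⁻¹ pp1 = j := by
    rw [hBB, mul_inv_rev, Equiv.Perm.mul_apply]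
    have c2 : (cyc n (i:ℕ) (permCode w' i))⁻¹ pp1 = pp1 := by
      apply Fin.ext
      rw [cyc_inv_apply (show (i:ℕ) + permCode w' i < n by omega)]
      have hppv : (pp1:ℕ) = (i:ℕ) + permCode w' i + 1 := rfl
      rw [hppv]
      split_ifs <;> omega
    rw [c2]
    rw [Equiv.Perm.inv_eq_iff_eq]
    exact hvj.symm
  have htarget : BB⁻¹ * Equiv.swap pp pp1 * BB = Equiv.swap i j := by
    have key := Equiv.swap_apply_apply BB⁻¹ pp pp1
    rw [inv_inv] at key
    rw [← key, hBpp, hBpp1]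
  -- reassemble the word
  have h6 : rowReading w = (P ++ R.take d1)
      ++ simpleT n ((i:ℕ) + permCode w' i) :: (R.drop (d1+1) ++ S) := by
    rw [hL]
    conv_lhs => rw [hRsplit]
    simp [List.append_assoc]
  have hprodw : w = (P ++ R.take d1).prod * (Equiv.swap pp pp1 * BB) := by
    conv_lhs => rw [← hLprod]
    rw [h6, List.prod_append, List.prod_cons, hsimp, hBBdef]
  have htakeE : (rowReading w).take E = P ++ R.take d1 := by
    rw [hL, hEPd, List.take_length_add_append]
    congr 1
    exact List.take_append_of_le_length (by omega)
  have hdropE : (rowReading w).drop (E+1) = R.drop (d1+1) ++ S := by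
    rw [hL, hEPd, (by omega : P.length + d1 + 1 = P.length + (d1+1)), List.drop_length_add_append]
    exact List.drop_append_of_le_length (by omega)
  constructor
  · rw [List.eraseIdx_eq_take_drop_succ, htakeE, hdropE, List.prod_append, ← hBBdef]
    have hA : (P ++ R.take d1).prod = w * (Equiv.swap pp pp1 * BB)⁻¹ := by
      rw [hprodw]; group
    rw [hA, hw']
    rw [mul_inv_rev, Equiv.swap_inv]
    calc w * (BB⁻¹ * Equiv.swap pp pp1) * BB
        = w * (BB⁻¹ * Equiv.swap pp pp1 * BB) := by group
      _ = w * Equiv.swap i j := by rw [htarget]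
  · rw [List.length_eraseIdx]
    have hlenL : (rowReading w).length = P.length + (R.length + S.length) := by
      rw [hL, List.length_append, List.length_append]
    rw [if_pos (by omega)]
    omega
end

section
/- Given 0 ≤ i ≤ n-2, the 2×2 rotation relation in SO(n): for all t ∈ ℝ, exp(t A_i) · exp((π/2) A_{i+1}) · exp((π/2) A_i) = exp((π/2) A_{i+1}) · exp((π/2) A_i) · exp(t A_{i+1}), where A_i = E_{i,i+1} − E_{i+1,i} is the standard skew-symmetric generator. -/
open NormedSpace Real

/-- The standard skew-symmetric generator `A_i = E_{i,i+1} − E_{i+1,i}`, given here by a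
pair of indices `p, q` standing for `i` and `i+1`. -/
def Amat {n : ℕ} (p q : Fin n) : Matrix (Fin n) (Fin n) ℝ :=
  Matrix.single p q 1 - Matrix.single q p 1

section General

variable {𝔸 : Type*} [NormedRing 𝔸] [NormedAlgebra ℝ 𝔸] [CompleteSpace 𝔸]

open scoped Nat

theorem pow_odd_of_cube (A : 𝔸) (h : A * A * A = -A) :
    ∀ k : ℕ, A ^ (2 * k + 1) = ((-1 : ℝ)) ^ k • A := by
  intro k
  induction k with
  | zero => simp
  | succ k ih =>
    have h2 : 2 * (k + 1) + 1 = (2 * k + 1) + 2 := by ring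
    rw [h2, pow_add, ih, pow_two, smul_mul_assoc, ← mul_assoc, h]
    rw [pow_succ]
    simp [smul_smul, mul_comm]

theorem pow_even_of_cube (A : 𝔸) (h : A * A * A = -A) :
    ∀ k : ℕ, A ^ (2 * k + 2) = ((-1 : ℝ)) ^ k • (A * A) := by
  intro k
  have h2 : 2 * k + 2 = (2 * k + 1) + 1 := by ring
  rw [h2, pow_succ, pow_odd_of_cube A h k, smul_mul_assoc]

set_option maxHeartbeats 1000000 in
/-- If `A³ = -A` in a Banach algebra, then
`exp (θ • A) = 1 + sin θ • A + (1 - cos θ) • A²`. -/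
theorem exp_smul_of_cube (A : 𝔸) (h : A * A * A = -A) (θ : ℝ) :
    exp (θ • A) = 1 + Real.sin θ • A + (1 - Real.cos θ) • (A * A) := by
  have hodd := pow_odd_of_cube A h
  have heven := pow_even_of_cube A h
  rw [exp_eq_tsum (𝕂 := ℝ)]
  show (∑' n : ℕ, (n !⁻¹ : ℝ) • (θ • A) ^ n) = _
  have hs : Summable fun n : ℕ => (n !⁻¹ : ℝ) • (θ • A) ^ n := expSeries_summable' (𝕂 := ℝ) (θ • A)
  have hinj2 : Function.Injective (fun k : ℕ => 2 * k) := fun a b hab => by simp only [] at hab; omega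
  have hinj21 : Function.Injective (fun k : ℕ => 2 * k + 1) := fun a b hab => by simp only [] at hab; omega
  have he : Summable (fun k : ℕ => ((2 * k)!⁻¹ : ℝ) • (θ • A) ^ (2 * k)) :=
    hs.comp_injective hinj2
  have ho : Summable (fun k : ℕ => ((2 * k + 1)!⁻¹ : ℝ) • (θ • A) ^ (2 * k + 1)) :=
    hs.comp_injective hinj21
  rw [← tsum_even_add_odd (f := fun n : ℕ => (n !⁻¹ : ℝ) • (θ • A) ^ n) he ho]
  -- scalar series facts
  have hcos := Real.hasSum_cos θ
  have hsin := Real.hasSum_sin θ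
  have hcs := hcos.summable
  have hshift : Summable fun k : ℕ => (-1 : ℝ) ^ (k + 1) * θ ^ (2 * (k + 1)) / (2 * (k + 1))! :=
    hcs.comp_injective Nat.succ_injective
  have hc1 : (∑' k : ℕ, (-1 : ℝ) ^ (k + 1) * θ ^ (2 * (k + 1)) / (2 * (k + 1))!) = Real.cos θ - 1 := by
    have h0 := tsum_eq_zero_add' (f := fun n : ℕ => (-1 : ℝ) ^ n * θ ^ (2 * n) / (2 * n)!) hshift
    rw [hcos.tsum_eq] at h0
    simp only [pow_zero, mul_zero, Nat.factorial_zero, Nat.cast_one, div_one, one_mul] at h0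
    linarith
  have hfun : ∀ k : ℕ, (-1 : ℝ) ^ (k + 1) * θ ^ (2 * (k + 1)) / (2 * (k + 1))!
      = -((-1 : ℝ) ^ k * θ ^ (2 * k + 2) / (2 * k + 2)!) := by
    intro k
    have h2 : 2 * (k + 1) = 2 * k + 2 := by ring
    rw [h2]; ring
  have hc2 : (∑' k : ℕ, (-1 : ℝ) ^ k * θ ^ (2 * k + 2) / (2 * k + 2)!) = 1 - Real.cos θ := by
    have := (tsum_neg (L := SummationFilter.unconditional ℕ) (f := fun k : ℕ => (-1 : ℝ) ^ k * θ ^ (2 * k + 2) / (2 * k + 2)!)).symm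
    rw [← tsum_congr hfun] at this
    rw [hc1] at this
    linear_combination -this
  have hcsum2 : Summable (fun k : ℕ => (-1 : ℝ) ^ k * θ ^ (2 * k + 2) / (2 * k + 2)!) := by
    have := hshift.neg
    refine this.congr fun k => ?_
    rw [hfun k]; ring
  -- even part
  have heshift : Summable (fun k : ℕ => ((2 * (k + 1))!⁻¹ : ℝ) • (θ • A) ^ (2 * (k + 1))) :=
    he.comp_injective Nat.succ_injective
  have heven_eq : (∑' k : ℕ, ((2 * k)!⁻¹ : ℝ) • (θ • A) ^ (2 * k))
      = 1 + (1 - Real.cos θ) • (A * A) := by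
    rw [tsum_eq_zero_add' (f := fun k : ℕ => ((2 * k)!⁻¹ : ℝ) • (θ • A) ^ (2 * k)) heshift]
    congr 1
    · simp
    · have : ∀ k : ℕ, ((2 * (k + 1))!⁻¹ : ℝ) • (θ • A) ^ (2 * (k + 1))
          = ((-1 : ℝ) ^ k * θ ^ (2 * k + 2) / (2 * k + 2)!) • (A * A) := by
        intro k
        have h2 : 2 * (k + 1) = 2 * k + 2 := by ring
        rw [h2, smul_pow, heven, smul_smul, smul_smul]
        congr 1
        ring
      rw [tsum_congr this, Summable.tsum_smul_const hcsum2, hc2]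
  -- odd part
  have hodd_eq : (∑' k : ℕ, ((2 * k + 1)!⁻¹ : ℝ) • (θ • A) ^ (2 * k + 1)) = Real.sin θ • A := by
    have hfn : ∀ k : ℕ, ((2 * k + 1)!⁻¹ : ℝ) • (θ • A) ^ (2 * k + 1)
        = ((-1 : ℝ) ^ k * θ ^ (2 * k + 1) / (2 * k + 1)!) • A := by
      intro k
      rw [smul_pow, hodd, smul_smul, smul_smul]
      congr 1
      ring
    rw [tsum_congr hfn, Summable.tsum_smul_const hsin.summable, hsin.tsum_eq]
  rw [heven_eq, hodd_eq]
  abel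

end General

/-- Matrix version of `exp_smul_of_cube`. -/
theorem Matrix.exp_smul_of_cube {m : Type*} [Fintype m] [DecidableEq m]
    (A : Matrix m m ℝ) (h : A * A * A = -A) (θ : ℝ) :
    exp (θ • A) = 1 + Real.sin θ • A + (1 - Real.cos θ) • (A * A) := by
  letI : SeminormedRing (Matrix m m ℝ) := Matrix.linftyOpSemiNormedRing
  letI : NormedRing (Matrix m m ℝ) := Matrix.linftyOpNormedRing
  letI : NormedAlgebra ℝ (Matrix m m ℝ) := Matrix.linftyOpNormedAlgebra
  exact _root_.exp_smul_of_cube A h θ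

theorem Amat_cube {n : ℕ} {p q : Fin n} (h : p ≠ q) :
    Amat p q * Amat p q * Amat p q = -(Amat p q) := by
  simp only [Amat, sub_mul, mul_sub]
  simp [Matrix.single_mul_single_same, Matrix.single_mul_single_of_ne, h, h.symm]
  abel

theorem Amat_semiconj {n : ℕ} {p q r : Fin n} (hpq : p ≠ q) (hqr : q ≠ r) (hpr : p ≠ r) :
    Amat p q * ((1 + Amat q r + Amat q r * Amat q r) * (1 + Amat p q + Amat p q * Amat p q))
      = ((1 + Amat q r + Amat q r * Amat q r) * (1 + Amat p q + Amat p q * Amat p q)) * Amat q r := by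
  simp only [Amat, sub_mul, mul_sub, add_mul, mul_add, mul_one, one_mul]
  simp [Matrix.single_mul_single_same, Matrix.single_mul_single_of_ne,
    hpq, hqr, hpr, hpq.symm, hqr.symm, hpr.symm]
  abel

/-- The rotation relation in `SO(n)`:
`exp(t A_i) exp((π/2) A_{i+1}) exp((π/2) A_i) = exp((π/2) A_{i+1}) exp((π/2) A_i) exp(t A_{i+1})`. -/
theorem rotation_relation {n : ℕ} (i₀ i₁ i₂ : Fin n)
    (h₁ : (i₁ : ℕ) = (i₀ : ℕ) + 1) (h₂ : (i₂ : ℕ) = (i₁ : ℕ) + 1) (t : ℝ) :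
    exp (t • Amat i₀ i₁) * exp ((π / 2) • Amat i₁ i₂) * exp ((π / 2) • Amat i₀ i₁)
      = exp ((π / 2) • Amat i₁ i₂) * exp ((π / 2) • Amat i₀ i₁) *
          exp (t • Amat i₁ i₂) := by
  have hpq : i₀ ≠ i₁ := fun h => by have := congrArg Fin.val h; omega
  have hqr : i₁ ≠ i₂ := fun h => by have := congrArg Fin.val h; omega
  have hpr : i₀ ≠ i₂ := fun h => by have := congrArg Fin.val h; omega
  set A₀ := Amat i₀ i₁ with hA₀
  set A₁ := Amat i₁ i₂ with hA₁
  have hc₀ := Amat_cube hpq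
  have hc₁ := Amat_cube hqr
  set G := (1 + A₁ + A₁ * A₁) * (1 + A₀ + A₀ * A₀) with hGdef
  have hE₀ : exp ((π / 2) • A₀) = 1 + A₀ + A₀ * A₀ := by
    rw [Matrix.exp_smul_of_cube A₀ hc₀ (π / 2)]
    simp [Real.sin_pi_div_two, Real.cos_pi_div_two]
  have hE₁ : exp ((π / 2) • A₁) = 1 + A₁ + A₁ * A₁ := by
    rw [Matrix.exp_smul_of_cube A₁ hc₁ (π / 2)]
    simp [Real.sin_pi_div_two, Real.cos_pi_div_two]
  have hG : exp ((π / 2) • A₁) * exp ((π / 2) • A₀) = G := by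
    rw [hE₀, hE₁]
  have hU : IsUnit G := by
    rw [← hG]
    exact (Matrix.isUnit_exp _).mul (Matrix.isUnit_exp _)
  have hUdet : IsUnit G.det := (Matrix.isUnit_iff_isUnit_det G).mp hU
  have hsemi : A₀ * G = G * A₁ := Amat_semiconj hpq hqr hpr
  have hconj : G * (t • A₁) * G⁻¹ = t • A₀ := by
    rw [Matrix.mul_smul, Matrix.smul_mul, ← hsemi, Matrix.mul_assoc,
      Matrix.mul_nonsing_inv G hUdet, Matrix.mul_one]
  have hkey : exp (t • A₀) * G = G * exp (t • A₁) := by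
    rw [← hconj, Matrix.exp_conj G (t • A₁) hU, Matrix.mul_assoc,
      Matrix.mul_assoc, Matrix.nonsing_inv_mul G hUdet, Matrix.mul_one]
  calc exp (t • A₀) * exp ((π / 2) • A₁) * exp ((π / 2) • A₀)
      = exp (t • A₀) * G := by rw [Matrix.mul_assoc, hG]
    _ = G * exp (t • A₁) := hkey
    _ = exp ((π / 2) • A₁) * exp ((π / 2) • A₀) * exp (t • A₁) := by rw [hG]
end
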